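/- Fix k ≥ 1 and positive integers q_1, …, q_k with sum N, and let a_j = (k+1) + (N − j) for 0 ≤ j ≤ N. Then as n → ∞, the quantity (n!/n^{n−1}) · (1/(q_1!⋯q_k!)) · (1/k!) · Σ_{j=0}^{N} binom(N,j)(−1)^{N−j} · (j/(n−a_j)) · (n−a_j)^{n−a_j−j}/(n−a_j−j)! converges to (1/(q_1!⋯q_k!)) · (1/k!) · e^{−(k+1)} · N · (1 − 1/e)^{N−1}. -/

import Mathlib

open scoped Nat
open Filter

lemma keyL (a B : ℕ) (hab : a ≤ B) :
    Tendsto (fun n : ℕ => (n ! : ℝ) / (n:ℝ)^(n-1) * ((n - a : ℕ):ℝ)^(n - B) / ((n - B)! : ℝ)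
      / ((n - a : ℕ):ℝ)) atTop (nhds (Real.exp (-(a:ℝ)))) := by
  set g : ℕ → ℝ := fun n =>
    (∏ i ∈ Finset.range B, (((n:ℝ) - i)/(n:ℝ))) *
      ((1 - (a:ℝ)/n)^n / (1 - (a:ℝ)/n)^B) * ((n:ℝ)/((n:ℝ) - a)) with hg
  have hdiv : ∀ c : ℝ, Tendsto (fun n : ℕ => c / (n:ℝ)) atTop (nhds 0) :=
    fun c => tendsto_const_div_atTop_nhds_zero_nat c
  have hbase : Tendsto (fun n : ℕ => 1 - (a:ℝ)/n) atTop (nhds 1) := by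
    simpa using (tendsto_const_nhds.sub (hdiv a))
  have h1 : Tendsto (fun n : ℕ => ∏ i ∈ Finset.range B, (((n:ℝ) - i)/(n:ℝ))) atTop (nhds 1) := by
    have : Tendsto (fun n : ℕ => ∏ i ∈ Finset.range B, (((n:ℝ) - i)/(n:ℝ))) atTop
        (nhds (∏ i ∈ Finset.range B, (1:ℝ))) := by
      apply tendsto_finset_prod
      intro i _
      apply Tendsto.congr' _ (by simpa using (tendsto_const_nhds.sub (hdiv i)))
      filter_upwards [eventually_ge_atTop 1] with n hn
      have hn0 : (n:ℝ) ≠ 0 := by positivity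
      field_simp
    simpa using this
  have h2 : Tendsto (fun n : ℕ => (1 - (a:ℝ)/n)^n) atTop (nhds (Real.exp (-(a:ℝ)))) := by
    have := Real.tendsto_one_add_div_pow_exp (-(a:ℝ))
    simpa [sub_eq_add_neg, neg_div] using this
  have h3 : Tendsto (fun n : ℕ => (1 - (a:ℝ)/n)^B) atTop (nhds 1) := by
    simpa using hbase.pow B
  have h4 : Tendsto (fun n : ℕ => (n:ℝ)/((n:ℝ) - a)) atTop (nhds 1) := by
    apply Tendsto.congr' _ (by simpa using hbase.inv₀ one_ne_zero)
    filter_upwards [eventually_gt_atTop a] with n hn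
    have hn0 : (n:ℝ) ≠ 0 := by
      have : 0 < n := by omega
      positivity
    have hna : (n:ℝ) - a ≠ 0 := by
      have : (a:ℝ) < n := by exact_mod_cast hn
      linarith
    field_simp
  have hgt : Tendsto g atTop (nhds (Real.exp (-(a:ℝ)))) := by
    have := (h1.mul (h2.div h3 one_ne_zero)).mul h4
    simpa only [one_mul, mul_one, div_one, Pi.div_apply] using this
  apply hgt.congr'
  filter_upwards [eventually_ge_atTop (B + a + 1)] with n hn
  have hBn : B ≤ n := by omega
  have han : a < n := by omega
  have hn0 : (n:ℝ) ≠ 0 := by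
    have : 0 < n := by omega
    positivity
  have hcast_a : ((n - a : ℕ):ℝ) = (n:ℝ) - a := by
    rw [Nat.cast_sub (le_of_lt han)]
  have hna : (n:ℝ) - (a:ℝ) ≠ 0 := by
    have : (a:ℝ) < n := by exact_mod_cast han
    linarith
  have hfac : ((n - B)! : ℝ) ≠ 0 := by positivity
  have hfact : (n ! : ℝ) = ((n - B)! : ℝ) * ∏ i ∈ Finset.range B, ((n:ℝ) - i) := by
    have h := Nat.factorial_mul_descFactorial hBn
    have h2 : (n.descFactorial B : ℝ) = ∏ i ∈ Finset.range B, ((n:ℝ) - i) := by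
      rw [Nat.descFactorial_eq_prod_range, Nat.cast_prod]
      apply Finset.prod_congr rfl
      intro i hi
      have : i ≤ n := by
        have := Finset.mem_range.mp hi; omega
      rw [Nat.cast_sub this]
    calc (n ! : ℝ) = (((n-B)! * n.descFactorial B : ℕ) : ℝ) := by rw [h]
    _ = ((n - B)! : ℝ) * ∏ i ∈ Finset.range B, ((n:ℝ) - i) := by
        push_cast [h2]
        ring
  have hsub : (1 : ℝ) - (a:ℝ)/n = ((n:ℝ) - a)/n := by field_simp
  obtain ⟨e, he⟩ : ∃ e, n - 1 = B + e := ⟨n - 1 - B, by omega⟩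
  have he2 : n - B = e + 1 := by omega
  have he3 : n = B + e + 1 := by omega
  rw [hg]
  simp only [hcast_a, hfact, hsub, he2, div_pow]
  rw [show (n:ℝ)^(n-1) = (n:ℝ)^(B+e) by rw [he]]
  rw [show ((((n:ℝ)-a)^n) : ℝ) = ((n:ℝ)-a)^(B+e+1) by rw [← he3]]
  rw [show (((n:ℝ))^n : ℝ) = ((n:ℝ))^(B+e+1) by rw [← he3]]
  rw [Finset.prod_div_distrib, Finset.prod_const, Finset.card_range]
  field_simp
  ring

lemma binomId (M : ℕ) (x : ℝ) :
    ∑ j ∈ Finset.range (M+1+1), (((M+1).choose j : ℝ) * (j:ℝ) * x^(M+1-j))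
      = (M+1 : ℝ) * (1+x)^M := by
  rw [Finset.sum_range_succ']
  simp only [Nat.cast_zero, mul_zero, zero_mul, add_zero]
  have hc : ∀ i ∈ Finset.range (M+1),
      (((M+1).choose (i+1) : ℝ) * ((i:ℝ)+1) * x^(M+1-(i+1)))
        = (M+1 : ℝ) * (((M).choose i : ℝ) * x^(M-i)) := by
    intro i _
    have h := Nat.add_one_mul_choose_eq M i
    have h' : ((M+1) * M.choose i : ℝ) = (((M+1).choose (i+1) : ℕ) : ℝ) * ((i:ℝ)+1) := by
      exact_mod_cast congrArg (Nat.cast (R := ℝ)) h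
    have hexp : M + 1 - (i + 1) = M - i := by omega
    rw [hexp]
    rw [← h']
    ring
  simp only [Nat.cast_add, Nat.cast_one]
  rw [Finset.sum_congr rfl hc, ← Finset.mul_sum]
  have hb : ((1:ℝ)+x)^M = ∑ i ∈ Finset.range (M+1), ((M.choose i:ℝ) * x^(M-i)) := by
    rw [add_pow]
    simp only [one_pow]
    exact Finset.sum_congr rfl (fun i _ => by ring)
  rw [hb]

lemma sumId (k N : ℕ) (hN : 1 ≤ N) :
    ∑ j ∈ Finset.range (N+1),
        ((N.choose j : ℝ) * (-1)^(N-j) * (j:ℝ)) * Real.exp (-(((k+1) + (N-j) : ℕ) : ℝ))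
      = Real.exp (-((k:ℝ)+1)) * N * (1 - 1/Real.exp 1) ^ (N-1) := by
  obtain ⟨M, rfl⟩ : ∃ M, N = M + 1 := ⟨N - 1, by omega⟩
  have hterm : ∀ j ∈ Finset.range (M+1+1),
      ((((M+1).choose j : ℝ) * (-1)^(M+1-j) * (j:ℝ)) * Real.exp (-(((k+1) + (M+1-j) : ℕ) : ℝ)))
        = Real.exp (-((k:ℝ)+1)) * ((((M+1).choose j : ℝ)) * (j:ℝ) * (-Real.exp (-1))^(M+1-j)) := by
    intro j _
    have : (-(((k+1) + (M+1-j) : ℕ) : ℝ)) = (-((k:ℝ)+1)) + ((M+1-j : ℕ) : ℝ) * (-1) := by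
      push_cast
      ring
    rw [this, Real.exp_add, Real.exp_nat_mul]
    rw [neg_pow (Real.exp (-1)) (M+1-j)]
    ring
  rw [Finset.sum_congr rfl hterm, ← Finset.mul_sum, binomId M (-Real.exp (-1))]
  have : (1 : ℝ) + -Real.exp (-1) = 1 - 1/Real.exp 1 := by
    rw [Real.exp_neg]
    ring
  rw [this]
  push_cast
  ring

/-- Limiting probability of the class `𝒯^{(3)}_{n;k,q₁,…,q_k}` of rooted labeled
trees whose root has `k` children with `q₁,…,q_k` children respectively and
root at distance `≥ 3` from every leaf. -/
theorem stmt_14 (k : ℕ) (hk : 1 ≤ k) (q : Fin k → ℕ) (hq : ∀ i, 1 ≤ q i)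
    (N : ℕ) (hN : N = ∑ i, q i) (a : ℕ → ℕ) (ha : ∀ j, a j = (k + 1) + (N - j)) :
    Tendsto
      (fun n : ℕ =>
        ((n ! : ℝ) / (n : ℝ) ^ (n - 1)) * (1 / ∏ i, ((q i)! : ℝ)) * (1 / (k ! : ℝ)) *
          ∑ j ∈ Finset.range (N + 1),
            (N.choose j : ℝ) * (-1) ^ (N - j) * ((j : ℝ) / ((n - a j : ℕ) : ℝ)) *
              ((n - a j : ℕ) : ℝ) ^ (n - a j - j) / ((n - a j - j)! : ℝ))
      atTop
      (nhds ((1 / ∏ i, ((q i)! : ℝ)) * (1 / (k ! : ℝ)) *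
        Real.exp (-((k : ℝ) + 1)) * N * (1 - 1 / Real.exp 1) ^ (N - 1))) := by
  have hN1 : 1 ≤ N := by
    have hle : q ⟨0, hk⟩ ≤ ∑ i, q i :=
      Finset.single_le_sum (fun i _ => Nat.zero_le _) (Finset.mem_univ _)
    rw [hN]
    exact le_trans (hq _) hle
  set B := k + 1 + N with hB
  set C : ℝ := (1 / ∏ i, ((q i)! : ℝ)) * (1 / (k ! : ℝ)) with hC
  have hL : ∀ j ∈ Finset.range (N+1),
      Tendsto (fun n : ℕ =>
          ((N.choose j : ℝ) * (-1)^(N-j) * (j:ℝ)) *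
            ((n ! : ℝ) / (n:ℝ)^(n-1) * ((n - a j : ℕ):ℝ)^(n - B) / ((n - B)! : ℝ)
              / ((n - a j : ℕ):ℝ)))
        atTop
        (nhds (((N.choose j : ℝ) * (-1)^(N-j) * (j:ℝ)) * Real.exp (-((a j : ℕ):ℝ)))) := by
    intro j hj
    have hab : a j ≤ B := by
      rw [ha j, hB]; omega
    exact (keyL (a j) B hab).const_mul _
  have hsum := tendsto_finset_sum (Finset.range (N+1)) hL
  have hmain := hsum.const_mul C
  have hfun : (fun n : ℕ =>
        ((n ! : ℝ) / (n : ℝ) ^ (n - 1)) * (1 / ∏ i, ((q i)! : ℝ)) * (1 / (k ! : ℝ)) *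
          ∑ j ∈ Finset.range (N + 1),
            (N.choose j : ℝ) * (-1) ^ (N - j) * ((j : ℝ) / ((n - a j : ℕ) : ℝ)) *
              ((n - a j : ℕ) : ℝ) ^ (n - a j - j) / ((n - a j - j)! : ℝ))
      = (fun n : ℕ => C * ∑ j ∈ Finset.range (N+1),
          ((N.choose j : ℝ) * (-1)^(N-j) * (j:ℝ)) *
            ((n ! : ℝ) / (n:ℝ)^(n-1) * ((n - a j : ℕ):ℝ)^(n - B) / ((n - B)! : ℝ)
              / ((n - a j : ℕ):ℝ))) := by
    funext n
    rw [hC, Finset.mul_sum, Finset.mul_sum]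
    apply Finset.sum_congr rfl
    intro j hj
    have hj' : j ≤ N := by
      have := Finset.mem_range.mp hj; omega
    have hexp : n - a j - j = n - B := by
      rw [ha j, hB]; omega
    rw [hexp]
    ring
  rw [hfun]
  have hval : C * ∑ j ∈ Finset.range (N+1),
      ((N.choose j : ℝ) * (-1)^(N-j) * (j:ℝ)) * Real.exp (-((a j : ℕ):ℝ))
      = (1 / ∏ i, ((q i)! : ℝ)) * (1 / (k ! : ℝ)) *
        Real.exp (-((k : ℝ) + 1)) * N * (1 - 1 / Real.exp 1) ^ (N - 1) := by
    have hrw : ∀ j ∈ Finset.range (N+1),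
        ((N.choose j : ℝ) * (-1)^(N-j) * (j:ℝ)) * Real.exp (-((a j : ℕ):ℝ))
          = ((N.choose j : ℝ) * (-1)^(N-j) * (j:ℝ)) * Real.exp (-(((k+1) + (N-j) : ℕ) : ℝ)) := by
      intro j _
      rw [ha j]
    rw [Finset.sum_congr rfl hrw, sumId k N hN1, hC]
    ring
  rw [← hval]
  exact hmain
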